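/- Let G be a one-sided POSG and let Γ₁, Γ₂ be nonempty convex sets of linear functions on Δ(S) such that sup_{α ∈ Γ₁} α(b) = sup_{α ∈ Γ₂} α(b) is finite for every b ∈ Δ(S). Then for every b ∈ Δ(S), sup_{π1 ∈ Π1} sup_{ᾱ ∈ Γ₁^{A1×O}} valcomp(π1, ᾱ)(b) = sup_{π1 ∈ Π1} sup_{ᾱ ∈ Γ₂^{A1×O}} valcomp(π1, ᾱ)(b); that is, the operator H does not depend on the convex set of linear functions used to represent the value function. -/

import Mathlib

open scoped BigOperators

noncomputable section

/-- ℓ1 distance on `S → ℝ`. -/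
def l1dist {S : Type*} [Fintype S] (p q : S → ℝ) : ℝ := ∑ s, |p s - q s|

/-- Evaluation at a belief `b` of the linear function on the simplex with vertex values
`α : S → ℝ`. -/
def lineval {S : Type*} [Fintype S] (α : S → ℝ) (b : S → ℝ) : ℝ := ∑ s, b s * α s

/-- `f` is `k`-Lipschitz with respect to the ℓ1 metric on the probability simplex. -/
def LipOnSimplex {S : Type*} [Fintype S] (k : ℝ) (f : (S → ℝ) → ℝ) : Prop :=
  ∀ p ∈ stdSimplex ℝ S, ∀ q ∈ stdSimplex ℝ S, |f p - f q| ≤ k * l1dist p q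

/-- A one-sided partially observable stochastic game. -/
structure OSPOSG (S A1 A2 O : Type*) [Fintype S] [Fintype A1] [Fintype A2] [Fintype O] where
  /-- transition function: `T s a1 a2 o s'` is the probability of observing `o` and moving
  to `s'` from `s` under actions `a1, a2`. -/
  T : S → A1 → A2 → O → S → ℝ
  T_nonneg : ∀ s a1 a2 o s', 0 ≤ T s a1 a2 o s'
  T_sum : ∀ s a1 a2, ∑ o, ∑ s', T s a1 a2 o s' = 1
  /-- reward function of player 1 -/
  R : S → A1 → A2 → ℝ
  /-- discount factor -/
  γ : ℝ
  γ_pos : 0 < γ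
  γ_lt_one : γ < 1

namespace OSPOSG

variable {S A1 A2 O : Type*} [Fintype S] [Fintype A1] [Fintype A2] [Fintype O]
  [Nonempty S] [Nonempty A1] [Nonempty A2] [Nonempty O]

/-- The minimum reward `r_min`. -/
def rmin (G : OSPOSG S A1 A2 O) : ℝ :=
  Finset.univ.inf' Finset.univ_nonempty fun x : S × A1 × A2 => G.R x.1 x.2.1 x.2.2

/-- The maximum reward `r_max`. -/
def rmax (G : OSPOSG S A1 A2 O) : ℝ :=
  Finset.univ.sup' Finset.univ_nonempty fun x : S × A1 × A2 => G.R x.1 x.2.1 x.2.2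

/-- `L = r_min / (1 - γ)`. -/
def Lval (G : OSPOSG S A1 A2 O) : ℝ := G.rmin / (1 - G.γ)

/-- `U = r_max / (1 - γ)`. -/
def Uval (G : OSPOSG S A1 A2 O) : ℝ := G.rmax / (1 - G.γ)

/-- `δ = (U - L) / 2`. -/
def δval (G : OSPOSG S A1 A2 O) : ℝ := (G.Uval - G.Lval) / 2

/-- The set of stage strategies of player 2. -/
def Pi2 (S A2 : Type*) [Fintype A2] : Set (S → A2 → ℝ) :=
  {π2 | ∀ s, π2 s ∈ stdSimplex ℝ A2}

/-- Vertex values of the value composition `valcomp(π1, ᾱ)`. -/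
def valcompVert (G : OSPOSG S A1 A2 O) (π1 : A1 → ℝ) (αb : A1 → O → S → ℝ) (s : S) : ℝ :=
  Finset.univ.inf' Finset.univ_nonempty fun a2 =>
    ∑ a1, π1 a1 * (G.R s a1 a2 + G.γ * ∑ o, ∑ s', G.T s a1 a2 o s' * αb a1 o s')

/-- The value composition `valcomp(π1, ᾱ)`, a linear function of the belief `b`. -/
def valcomp (G : OSPOSG S A1 A2 O) (π1 : A1 → ℝ) (αb : A1 → O → S → ℝ) (b : S → ℝ) : ℝ :=
  ∑ s, b s * G.valcompVert π1 αb s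

/-- `Pr_{b,π1,π2}[a1, o]`: the probability that player 1 plays `a1` and observes `o`. -/
def Pr (G : OSPOSG S A1 A2 O) (b : S → ℝ) (π1 : A1 → ℝ) (π2 : S → A2 → ℝ)
    (a1 : A1) (o : O) : ℝ :=
  ∑ s, ∑ a2, ∑ s', b s * π1 a1 * π2 s a2 * G.T s a1 a2 o s'

/-- The updated belief `τ(b, a1, π2, o)` of player 1 (junk value `0` if the normalizing
constant vanishes; such terms are always multiplied by a zero probability below). -/
def beliefUpd (G : OSPOSG S A1 A2 O) (b : S → ℝ) (a1 : A1) (π2 : S → A2 → ℝ) (o : O) :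
    S → ℝ := fun s' =>
  (∑ s, ∑ a2, b s * π2 s a2 * G.T s a1 a2 o s') /
    (∑ s'', ∑ s, ∑ a2, b s * π2 s a2 * G.T s a1 a2 o s'')

/-- The stage utility `u^{V,b}(π1, π2)`. -/
def stageU (G : OSPOSG S A1 A2 O) (V : (S → ℝ) → ℝ) (b : S → ℝ)
    (π1 : A1 → ℝ) (π2 : S → A2 → ℝ) : ℝ :=
  (∑ s, ∑ a1, ∑ a2, b s * π1 a1 * π2 s a2 * G.R s a1 a2) +
    G.γ * ∑ a1, ∑ o, G.Pr b π1 π2 a1 o * V (G.beliefUpd b a1 π2 o)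

/-- The minimax (Bellman) operator `[HV](b) = sup_{π1} inf_{π2} u^{V,b}(π1,π2)`. -/
def Hop (G : OSPOSG S A1 A2 O) (V : (S → ℝ) → ℝ) (b : S → ℝ) : ℝ :=
  ⨆ π1 : stdSimplex ℝ A1, ⨅ π2 : Pi2 S A2, G.stageU V b π1.1 π2.1

end OSPOSG


section AuxMinimax

open Finset Pointwise

open Finset

lemma minimax_aux {E : Type*} [AddCommGroup E] [Module ℝ E] {D : Type*} [Fintype D] [Nonempty D]
    {C : Set E} (hC : Convex ℝ C) (hCne : C.Nonempty)
    (L : D → E → ℝ)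
    (hL : ∀ d : D, ∀ a b : E, ∀ p q : ℝ, 0 ≤ p → 0 ≤ q → p + q = 1 →
      L d (p • a + q • b) = p * L d a + q * L d b)
    (hbdd : BddAbove ((fun x => Finset.univ.inf' Finset.univ_nonempty fun d => L d x) '' C))
    {ε : ℝ} (hε : 0 < ε) :
    ∃ lam : D → ℝ, (∀ d, 0 ≤ lam d) ∧ ∑ d, lam d = 1 ∧
      ∀ x ∈ C, ∑ d, lam d * L d x ≤
        sSup ((fun x => Finset.univ.inf' Finset.univ_nonempty fun d => L d x) '' C) + ε := by
  classical
  set F : E → ℝ := fun x => Finset.univ.inf' Finset.univ_nonempty fun d => L d x with hF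
  set t : ℝ := sSup (F '' C) with ht
  set K : Set (D → ℝ) := {y | ∃ x ∈ C, ∀ d, y d ≤ L d x} with hK
  have hKconv : Convex ℝ K := by
    rintro y₁ ⟨x₁, hx₁, hy₁⟩ y₂ ⟨x₂, hx₂, hy₂⟩ p q hp hq hpq
    refine ⟨p • x₁ + q • x₂, hC hx₁ hx₂ hp hq hpq, fun d => ?_⟩
    rw [hL d x₁ x₂ p q hp hq hpq]
    have := add_le_add (mul_le_mul_of_nonneg_left (hy₁ d) hp)
      (mul_le_mul_of_nonneg_left (hy₂ d) hq)
    simpa using this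
  obtain ⟨x₀, hx₀⟩ := hCne
  have hy₀K : (fun d => L d x₀) ∈ K := ⟨x₀, hx₀, fun d => le_rfl⟩
  set Q : Set (D → ℝ) := Set.univ.pi fun _ => Set.Ioi (t + ε) with hQ
  have hQopen : IsOpen Q := isOpen_set_pi Set.finite_univ fun _ _ => isOpen_Ioi
  have hQconv : Convex ℝ Q := convex_pi fun _ _ => convex_Ioi _
  have hdisj : Disjoint Q K := by
    rw [Set.disjoint_left]
    rintro y hyQ ⟨x, hxC, hyx⟩
    have h1 : F x ≤ t := le_csSup hbdd ⟨x, hxC, rfl⟩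
    have h2 : t + ε ≤ F x := by
      apply Finset.le_inf'
      intro d _
      exact le_trans (le_of_lt (hyQ d (Set.mem_univ d))) (hyx d)
    linarith
  obtain ⟨f, u, hfQ, hfK⟩ := geometric_hahn_banach_open hQconv hQopen hKconv hdisj
  set lam0 : D → ℝ := fun d => -f (Pi.single d (1:ℝ)) with hlam0
  have hfy : ∀ y : D → ℝ, f y = -∑ d, lam0 d * y d := by
    intro y
    have hrep : y = ∑ d, y d • (Pi.single d (1:ℝ) : D → ℝ) := by
      funext i
      simp [Pi.single_apply, Finset.sum_apply, mul_comm]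
    conv_lhs => rw [hrep]
    rw [map_sum, ← Finset.sum_neg_distrib]
    refine Finset.sum_congr rfl fun d _ => ?_
    rw [map_smul]
    simp [hlam0]
    ring
  have hu0 : u ≤ -∑ d, lam0 d * L d x₀ := by
    have := hfK _ hy₀K; rwa [hfy] at this
  have hlam0_nonneg : ∀ d, 0 ≤ lam0 d := by
    intro d
    by_contra hneg
    push_neg at hneg
    set M : ℝ := (u - (-∑ d', lam0 d' * L d' x₀) - 1) / lam0 d with hM
    have hMnonneg : 0 ≤ M := by
      refine div_nonneg_iff.mpr (Or.inr ⟨by linarith, le_of_lt hneg⟩)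
    set y' : D → ℝ := fun d' => L d' x₀ - M * ((Pi.single d (1:ℝ) : D → ℝ) d') with hy'
    have hy'K : y' ∈ K := by
      refine ⟨x₀, hx₀, fun d' => ?_⟩
      have : 0 ≤ M * ((Pi.single d (1:ℝ) : D → ℝ) d') := by
        apply mul_nonneg hMnonneg
        by_cases h : d' = d <;> simp [Pi.single_apply, h]
      simp only [hy']
      linarith
    have hval := hfK _ hy'K
    rw [hfy] at hval
    have hexp : ∑ d', lam0 d' * y' d' = (∑ d', lam0 d' * L d' x₀) - M * lam0 d := by
      simp only [hy', mul_sub, Finset.sum_sub_distrib]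
      congr 1
      rw [Finset.sum_eq_single d]
      · simp [mul_comm, mul_assoc, mul_left_comm]
      · intro d' _ hd'; simp [Pi.single_apply, hd']
      · intro h; exact absurd (Finset.mem_univ d) h
    rw [hexp] at hval
    have hMl : M * lam0 d = u - (-∑ d', lam0 d' * L d' x₀) - 1 := by
      rw [hM, div_mul_cancel₀ _ (ne_of_lt hneg)]
    -- hval : u ≤ -((∑ ...) - M * lam0 d)
    rw [hMl] at hval
    linarith
  have hQconst : ∀ r : ℝ, 0 < r → -((t + ε + r) * ∑ d, lam0 d) < u := by
    intro r hr
    have hmem : (fun _ : D => t + ε + r) ∈ Q := fun d _ => by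
      simp only [Set.mem_Ioi]; linarith
    have := hfQ _ hmem
    rw [hfy] at this
    have heq2 : ∑ d, lam0 d * (t + ε + r) = (t + ε + r) * ∑ d, lam0 d := by
      rw [Finset.mul_sum]; exact Finset.sum_congr rfl fun d _ => by ring
    rwa [heq2] at this
  have hsum_pos : 0 < ∑ d, lam0 d := by
    rcases lt_or_eq_of_le (Finset.sum_nonneg fun d _ => hlam0_nonneg d) with h | h
    · exact h
    · exfalso
      have h2 := hQconst 1 one_pos
      rw [← h] at h2
      simp only [mul_zero, neg_zero] at h2
      -- h2 : 0 < u
      have hall : ∀ d, lam0 d = 0 := fun d =>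
        (Finset.sum_eq_zero_iff_of_nonneg fun d _ => hlam0_nonneg d).1 h.symm d (Finset.mem_univ d)
      have : u ≤ 0 := by
        have := hu0
        simp [hall] at this
        exact this
      linarith
  have hu : -u ≤ (t + ε) * ∑ d, lam0 d := by
    by_contra hcon
    push_neg at hcon
    set r := (-u - (t + ε) * ∑ d, lam0 d) / (∑ d, lam0 d) with hr
    have hrpos : 0 < r := div_pos (by linarith) hsum_pos
    have := hQconst r hrpos
    have hexp : (t + ε + r) * ∑ d, lam0 d = (t+ε) * (∑ d, lam0 d) + r * ∑ d, lam0 d := by ring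
    rw [hexp, hr, div_mul_cancel₀ _ (ne_of_gt hsum_pos)] at this
    linarith
  refine ⟨fun d => lam0 d / ∑ d', lam0 d', fun d => div_nonneg (hlam0_nonneg d) (le_of_lt hsum_pos),
    by rw [← Finset.sum_div, div_self (ne_of_gt hsum_pos)], fun x hx => ?_⟩
  have hyK : (fun d => L d x) ∈ K := ⟨x, hx, fun d => le_rfl⟩
  have h1 : u ≤ -∑ d, lam0 d * L d x := by
    have := hfK _ hyK; rwa [hfy] at this
  have h2 : ∑ d, lam0 d * L d x ≤ (t + ε) * ∑ d, lam0 d := by linarith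
  have h3 : ∑ d, lam0 d / (∑ d', lam0 d') * L d x = (∑ d, lam0 d * L d x) / ∑ d', lam0 d' := by
    rw [Finset.sum_div]
    exact Finset.sum_congr rfl fun d _ => by ring
  rw [h3, div_le_iff₀ hsum_pos]
  calc ∑ d, lam0 d * L d x ≤ (t + ε) * ∑ d, lam0 d := h2
  _ = (t + ε) * ∑ d', lam0 d' := rfl

/-- Reordering of a quintuple sum. -/
lemma sum_swap5 {i1 i2 i3 i4 i5 : Type*} [Fintype i1] [Fintype i2] [Fintype i3]
    [Fintype i4] [Fintype i5] (f : i1 → i2 → i3 → i4 → i5 → ℝ) :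
    ∑ a, ∑ b, ∑ c, ∑ d, ∑ e, f a b c d e = ∑ c, ∑ d, ∑ e, ∑ a, ∑ b, f a b c d e := by
  have h1 : ∑ a, ∑ b, ∑ c, ∑ d, ∑ e, f a b c d e
      = ∑ p : i1 × i2, ∑ q : i3 × i4 × i5, f p.1 p.2 q.1 q.2.1 q.2.2 := by
    rw [Fintype.sum_prod_type]
    refine Finset.sum_congr rfl fun a _ => ?_
    refine Finset.sum_congr rfl fun b _ => ?_
    rw [Fintype.sum_prod_type]
    refine Finset.sum_congr rfl fun c _ => ?_
    rw [Fintype.sum_prod_type]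
  have h2 : ∑ c, ∑ d, ∑ e, ∑ a, ∑ b, f a b c d e
      = ∑ q : i3 × i4 × i5, ∑ p : i1 × i2, f p.1 p.2 q.1 q.2.1 q.2.2 := by
    rw [Fintype.sum_prod_type]
    refine Finset.sum_congr rfl fun c _ => ?_
    rw [Fintype.sum_prod_type]
    refine Finset.sum_congr rfl fun d _ => ?_
    refine Finset.sum_congr rfl fun e _ => ?_
    rw [Fintype.sum_prod_type]
  rw [h1, h2, Finset.sum_comm]

lemma lineval_single {S : Type*} [Fintype S] [DecidableEq S] (α : S → ℝ) (s' : S) :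
    lineval α (Pi.single s' 1) = α s' := by
  simp [lineval, Pi.single_apply]

/-- weighted sum in terms of `lineval` at the normalized belief -/
lemma weighted_eq_lineval {S : Type*} [Fintype S] (w : S → ℝ) (α : S → ℝ)
    (hc : ∑ s, w s ≠ 0) :
    ∑ s, w s * α s = (∑ s', w s') * lineval α (fun s => w s / ∑ s', w s') := by
  rw [lineval, Finset.mul_sum]
  refine Finset.sum_congr rfl fun s _ => ?_
  field_simp

lemma normalized_mem_stdSimplex {S : Type*} [Fintype S] (w : S → ℝ) (hw : ∀ s, 0 ≤ w s)
    (hc : ∑ s, w s ≠ 0) : (fun s => w s / ∑ s', w s') ∈ stdSimplex ℝ S := by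
  have hpos : 0 < ∑ s, w s :=
    lt_of_le_of_ne (Finset.sum_nonneg fun s _ => hw s) (Ne.symm hc)
  exact ⟨fun s => div_nonneg (hw s) hpos.le, by rw [← Finset.sum_div, div_self hc]⟩

lemma bddAbove_weighted {S : Type*} [Fintype S] {Γ : Set (S → ℝ)}
    (hbdd : ∀ b ∈ stdSimplex ℝ S, BddAbove ((fun α => lineval α b) '' Γ))
    (w : S → ℝ) (hw : ∀ s, 0 ≤ w s) :
    BddAbove ((fun α => ∑ s, w s * α s) '' Γ) := by
  by_cases hc : ∑ s, w s = 0
  · have hw0 : ∀ s ∈ Finset.univ, w s = 0 :=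
      (Finset.sum_eq_zero_iff_of_nonneg fun s _ => hw s).1 hc
    refine ⟨0, ?_⟩
    rintro _ ⟨α, hα, rfl⟩
    simp only
    rw [Finset.sum_eq_zero fun s hs => by rw [hw0 s hs, zero_mul]]
  · have hpos : 0 < ∑ s, w s :=
      lt_of_le_of_ne (Finset.sum_nonneg fun s _ => hw s) (Ne.symm hc)
    obtain ⟨B, hB⟩ := hbdd _ (normalized_mem_stdSimplex w hw hc)
    refine ⟨(∑ s, w s) * B, ?_⟩
    rintro _ ⟨α, hα, rfl⟩
    simp only
    rw [weighted_eq_lineval w α hc]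
    exact mul_le_mul_of_nonneg_left (hB ⟨α, hα, rfl⟩) hpos.le

lemma sSup_weighted_eq {S : Type*} [Fintype S] {Γ₁ Γ₂ : Set (S → ℝ)}
    (hne1 : Γ₁.Nonempty) (hne2 : Γ₂.Nonempty)
    (heq : ∀ b ∈ stdSimplex ℝ S,
      sSup ((fun α => lineval α b) '' Γ₁) = sSup ((fun α => lineval α b) '' Γ₂))
    (w : S → ℝ) (hw : ∀ s, 0 ≤ w s) :
    sSup ((fun α => ∑ s, w s * α s) '' Γ₁) = sSup ((fun α => ∑ s, w s * α s) '' Γ₂) := by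
  by_cases hc : ∑ s, w s = 0
  · have hw0 : ∀ s ∈ Finset.univ, w s = 0 :=
      (Finset.sum_eq_zero_iff_of_nonneg fun s _ => hw s).1 hc
    have hz : ∀ α : S → ℝ, ∑ s, w s * α s = 0 := fun α =>
      Finset.sum_eq_zero fun s hs => by rw [hw0 s hs, zero_mul]
    have himg : ∀ (Γ : Set (S → ℝ)), Γ.Nonempty → (fun α : S → ℝ => ∑ s, w s * α s) '' Γ = {0} := by
      intro Γ hne
      rw [Set.image_congr' hz]
      exact Set.Nonempty.image_const hne 0
    rw [himg Γ₁ hne1, himg Γ₂ hne2]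
  · have hpos : 0 < ∑ s, w s :=
      lt_of_le_of_ne (Finset.sum_nonneg fun s _ => hw s) (Ne.symm hc)
    have himg : ∀ Γ : Set (S → ℝ), (fun α : S → ℝ => ∑ s, w s * α s) '' Γ
        = (fun r => (∑ s', w s') * r) '' ((fun α => lineval α (fun s => w s / ∑ s', w s')) '' Γ) := by
      intro Γ
      rw [Set.image_image]
      exact Set.image_congr' (fun α => (weighted_eq_lineval w α hc))
    have hscale : ∀ A : Set ℝ, sSup ((fun r => (∑ s', w s') * r) '' A) = (∑ s', w s') * sSup A := by
      intro A
      have h1 : (fun r => (∑ s', w s') * r) '' A = (∑ s', w s') • A := by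
        rw [show (fun r : ℝ => (∑ s', w s') * r) = (fun r : ℝ => (∑ s', w s') • r) from rfl,
          Set.image_smul]
      rw [h1, Real.sSup_smul_of_nonneg hpos.le, smul_eq_mul]
    rw [himg Γ₁, himg Γ₂, hscale, hscale,
      heq _ (normalized_mem_stdSimplex w hw hc)]

/-- distributing an `inf'` across a nonnegatively-weighted sum -/
lemma sum_inf'_eq {S A2 : Type*} [Fintype S] [Fintype A2] [Nonempty S] [Nonempty A2]
    [DecidableEq S] (b : S → ℝ) (hb : ∀ s, 0 ≤ b s) (g : S → A2 → ℝ) :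
    Finset.univ.inf' Finset.univ_nonempty (fun d : S → A2 => ∑ s, b s * g s (d s))
      = ∑ s, b s * Finset.univ.inf' Finset.univ_nonempty (fun a2 => g s a2) := by
  apply le_antisymm
  · have h : ∀ s : S, ∃ a2, Finset.univ.inf' Finset.univ_nonempty (fun a2 => g s a2) = g s a2 := by
      intro s
      obtain ⟨a2, -, h⟩ := Finset.exists_mem_eq_inf' Finset.univ_nonempty (fun a2 => g s a2)
      exact ⟨a2, h⟩
    choose dmin hdmin using h
    calc Finset.univ.inf' Finset.univ_nonempty (fun d : S → A2 => ∑ s, b s * g s (d s))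
        ≤ ∑ s, b s * g s (dmin s) := Finset.inf'_le _ (Finset.mem_univ dmin)
      _ = ∑ s, b s * Finset.univ.inf' Finset.univ_nonempty (fun a2 => g s a2) :=
        Finset.sum_congr rfl fun s _ => by rw [hdmin s]
  · apply Finset.le_inf'
    intro d _
    refine Finset.sum_le_sum fun s _ => mul_le_mul_of_nonneg_left
      (Finset.inf'_le _ (Finset.mem_univ (d s))) (hb s)

end AuxMinimax


namespace OSPOSG

section PosgAux

open Finset

variable {S A1 A2 O : Type*} [Fintype S] [Fintype A1] [Fintype A2] [Fintype O]
  [Nonempty S] [Nonempty A1] [Nonempty A2] [Nonempty O]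

/-- the inner affine functional appearing in `valcompVert` -/
def ell (G : OSPOSG S A1 A2 O) (π1 : A1 → ℝ) (s : S) (a2 : A2) (x : A1 → O → S → ℝ) : ℝ :=
  ∑ a1, π1 a1 * (G.R s a1 a2 + G.γ * ∑ o, ∑ s', G.T s a1 a2 o s' * x a1 o s')

lemma valcompVert_eq_inf'_ell (G : OSPOSG S A1 A2 O) (π1 : A1 → ℝ) (x : A1 → O → S → ℝ)
    (s : S) : G.valcompVert π1 x s
      = Finset.univ.inf' Finset.univ_nonempty (fun a2 => ell G π1 s a2 x) := rfl

/-- belief-weighted affine functional for a pure strategy `d` of player 2 -/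
def Lfun (G : OSPOSG S A1 A2 O) (π1 : A1 → ℝ) (b : S → ℝ) (d : S → A2)
    (x : A1 → O → S → ℝ) : ℝ :=
  ∑ s, b s * ell G π1 s (d s) x

lemma ell_affine (G : OSPOSG S A1 A2 O) (π1 : A1 → ℝ) (s : S) (a2 : A2)
    (x y : A1 → O → S → ℝ) (p q : ℝ) (hpq : p + q = 1) :
    ell G π1 s a2 (p • x + q • y) = p * ell G π1 s a2 x + q * ell G π1 s a2 y := by
  unfold ell
  rw [Finset.mul_sum, Finset.mul_sum, ← Finset.sum_add_distrib]
  refine Finset.sum_congr rfl fun a1 _ => ?_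
  have hinner : ∑ o, ∑ s', G.T s a1 a2 o s' * (p • x + q • y) a1 o s'
      = p * (∑ o, ∑ s', G.T s a1 a2 o s' * x a1 o s')
        + q * (∑ o, ∑ s', G.T s a1 a2 o s' * y a1 o s') := by
    rw [Finset.mul_sum, Finset.mul_sum, ← Finset.sum_add_distrib]
    refine Finset.sum_congr rfl fun o _ => ?_
    rw [Finset.mul_sum, Finset.mul_sum, ← Finset.sum_add_distrib]
    refine Finset.sum_congr rfl fun s' _ => ?_
    simp only [Pi.add_apply, Pi.smul_apply, smul_eq_mul]
    ring
  rw [hinner]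
  linear_combination (-(π1 a1 * G.R s a1 a2)) * hpq

lemma Lfun_affine (G : OSPOSG S A1 A2 O) (π1 : A1 → ℝ) (b : S → ℝ) (d : S → A2)
    (x y : A1 → O → S → ℝ) (p q : ℝ) (hp : 0 ≤ p) (hq : 0 ≤ q) (hpq : p + q = 1) :
    Lfun G π1 b d (p • x + q • y) = p * Lfun G π1 b d x + q * Lfun G π1 b d y := by
  unfold Lfun
  rw [Finset.mul_sum, Finset.mul_sum, ← Finset.sum_add_distrib]
  refine Finset.sum_congr rfl fun s _ => ?_
  rw [ell_affine G π1 s (d s) x y p q hpq]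
  ring

lemma inf'_Lfun_eq (G : OSPOSG S A1 A2 O) [DecidableEq S] (π1 : A1 → ℝ) {b : S → ℝ}
    (hb : ∀ s, 0 ≤ b s) (x : A1 → O → S → ℝ) :
    Finset.univ.inf' Finset.univ_nonempty (fun d : S → A2 => Lfun G π1 b d x)
      = G.valcomp π1 x b := by
  unfold Lfun
  rw [sum_inf'_eq b hb (fun s a2 => ell G π1 s a2 x)]
  rfl

/-- decomposition of a `lam`-mixture of the `Lfun` into constant and linear part -/
lemma sum_lam_Lfun (G : OSPOSG S A1 A2 O) [DecidableEq S] (π1 : A1 → ℝ) (b : S → ℝ)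
    (lam : (S → A2) → ℝ) (x : A1 → O → S → ℝ) :
    ∑ d, lam d * Lfun G π1 b d x
      = (∑ d, lam d * ∑ s, b s * ∑ a1, π1 a1 * G.R s a1 (d s))
        + ∑ a1, ∑ o, ∑ s',
            (∑ d, lam d * ∑ s, b s * (π1 a1 * (G.γ * G.T s a1 (d s) o s'))) * x a1 o s' := by
  have hsplit : ∀ d, lam d * Lfun G π1 b d x
      = lam d * (∑ s, b s * ∑ a1, π1 a1 * G.R s a1 (d s))
        + ∑ s, ∑ a1, ∑ o, ∑ s',
            lam d * (b s * (π1 a1 * (G.γ * (G.T s a1 (d s) o s' * x a1 o s')))) := by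
    intro d
    unfold Lfun ell
    have hs : ∀ s, b s * (∑ a1, π1 a1 *
          (G.R s a1 (d s) + G.γ * ∑ o, ∑ s', G.T s a1 (d s) o s' * x a1 o s'))
        = b s * (∑ a1, π1 a1 * G.R s a1 (d s))
          + ∑ a1, ∑ o, ∑ s', b s * (π1 a1 * (G.γ * (G.T s a1 (d s) o s' * x a1 o s'))) := by
      intro s
      rw [Finset.mul_sum, Finset.mul_sum, ← Finset.sum_add_distrib]
      refine Finset.sum_congr rfl fun a1 _ => ?_
      have hpush : ∑ o, ∑ s', b s * (π1 a1 * (G.γ * (G.T s a1 (d s) o s' * x a1 o s')))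
          = b s * (π1 a1 * (G.γ * ∑ o, ∑ s', G.T s a1 (d s) o s' * x a1 o s')) := by
        simp only [Finset.mul_sum]
      rw [hpush]
      ring
    rw [Finset.sum_congr rfl fun s _ => hs s, Finset.sum_add_distrib, mul_add]
    congr 1
    rw [Finset.mul_sum]
    refine Finset.sum_congr rfl fun s _ => ?_
    rw [Finset.mul_sum]
    refine Finset.sum_congr rfl fun a1 _ => ?_
    rw [Finset.mul_sum]
    refine Finset.sum_congr rfl fun o _ => ?_
    rw [Finset.mul_sum]
  rw [Finset.sum_congr rfl fun d _ => hsplit d, Finset.sum_add_distrib]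
  congr 1
  rw [sum_swap5 (fun d s a1 o s' =>
    lam d * (b s * (π1 a1 * (G.γ * (G.T s a1 (d s) o s' * x a1 o s')))))]
  refine Finset.sum_congr rfl fun a1 _ => Finset.sum_congr rfl fun o _ =>
    Finset.sum_congr rfl fun s' _ => ?_
  rw [Finset.sum_mul]
  refine Finset.sum_congr rfl fun d _ => ?_
  rw [Finset.mul_sum, Finset.sum_mul]
  refine Finset.sum_congr rfl fun s _ => ?_
  ring

/-- uniform upper bound for the set of value compositions -/
lemma bddAbove_valcompSet (G : OSPOSG S A1 A2 O) {Γ : Set (S → ℝ)}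
    (hbdd : ∀ b' ∈ stdSimplex ℝ S, BddAbove ((fun α => lineval α b') '' Γ))
    {b : S → ℝ} (hb : b ∈ stdSimplex ℝ S) :
    BddAbove {y : ℝ | ∃ π1 ∈ stdSimplex ℝ A1, ∃ αb : A1 → O → S → ℝ,
        (∀ a1 o, αb a1 o ∈ Γ) ∧ y = G.valcomp π1 αb b} := by
  classical
  set Mv : ℝ := Finset.univ.sup' Finset.univ_nonempty
    (fun s' : S => sSup ((fun α => lineval α (Pi.single s' 1)) '' Γ)) with hMv
  refine ⟨G.rmax + G.γ * Mv, ?_⟩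
  rintro y ⟨π1, hπ1, αb, hαb, rfl⟩
  have hαle : ∀ a1 o s', αb a1 o s' ≤ Mv := by
    intro a1 o s'
    have h1 : lineval (αb a1 o) (Pi.single s' 1)
        ≤ sSup ((fun α => lineval α (Pi.single s' 1)) '' Γ) :=
      le_csSup (hbdd _ (single_mem_stdSimplex ℝ s')) ⟨αb a1 o, hαb a1 o, rfl⟩
    rw [lineval_single] at h1
    rw [hMv]
    exact le_trans h1 (Finset.le_sup'
      (fun s'' : S => sSup ((fun α => lineval α (Pi.single s'' 1)) '' Γ)) (Finset.mem_univ s'))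
  have hvert : ∀ s, G.valcompVert π1 αb s ≤ G.rmax + G.γ * Mv := by
    intro s
    have a2₀ := Classical.arbitrary A2
    refine le_trans (Finset.inf'_le _ (Finset.mem_univ a2₀)) ?_
    have hinner : ∀ a1, G.R s a1 a2₀ + G.γ * ∑ o, ∑ s', G.T s a1 a2₀ o s' * αb a1 o s'
        ≤ G.rmax + G.γ * Mv := by
      intro a1
      have hR : G.R s a1 a2₀ ≤ G.rmax :=
        Finset.le_sup' (f := fun x : S × A1 × A2 => G.R x.1 x.2.1 x.2.2)
          (Finset.mem_univ (s, a1, a2₀))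
      have hT : ∑ o, ∑ s', G.T s a1 a2₀ o s' * αb a1 o s' ≤ Mv := by
        calc ∑ o, ∑ s', G.T s a1 a2₀ o s' * αb a1 o s'
            ≤ ∑ o, ∑ s', G.T s a1 a2₀ o s' * Mv :=
              Finset.sum_le_sum fun o _ => Finset.sum_le_sum fun s' _ =>
                mul_le_mul_of_nonneg_left (hαle a1 o s') (G.T_nonneg s a1 a2₀ o s')
          _ = (∑ o, ∑ s', G.T s a1 a2₀ o s') * Mv := by
              rw [Finset.sum_mul]
              exact Finset.sum_congr rfl fun o _ => by rw [Finset.sum_mul]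
          _ = Mv := by rw [G.T_sum, one_mul]
      exact add_le_add hR (mul_le_mul_of_nonneg_left hT G.γ_pos.le)
    calc ∑ a1, π1 a1 * (G.R s a1 a2₀ + G.γ * ∑ o, ∑ s', G.T s a1 a2₀ o s' * αb a1 o s')
        ≤ ∑ a1, π1 a1 * (G.rmax + G.γ * Mv) :=
          Finset.sum_le_sum fun a1 _ =>
            mul_le_mul_of_nonneg_left (hinner a1) (hπ1.1 a1)
      _ = G.rmax + G.γ * Mv := by rw [← Finset.sum_mul, hπ1.2, one_mul]
  calc G.valcomp π1 αb b = ∑ s, b s * G.valcompVert π1 αb s := rfl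
    _ ≤ ∑ s, b s * (G.rmax + G.γ * Mv) :=
        Finset.sum_le_sum fun s _ => mul_le_mul_of_nonneg_left (hvert s) (hb.1 s)
    _ = G.rmax + G.γ * Mv := by rw [← Finset.sum_mul, hb.2, one_mul]

/-- one-sided comparison of max-composition suprema -/
lemma key_le (G : OSPOSG S A1 A2 O)
    (Γ₁ Γ₂ : Set (S → ℝ)) (hne1 : Γ₁.Nonempty) (hne2 : Γ₂.Nonempty)
    (hconv2 : Convex ℝ Γ₂)
    (hbdd1 : ∀ b ∈ stdSimplex ℝ S, BddAbove ((fun α => lineval α b) '' Γ₁))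
    (hbdd2 : ∀ b ∈ stdSimplex ℝ S, BddAbove ((fun α => lineval α b) '' Γ₂))
    (heq : ∀ b ∈ stdSimplex ℝ S,
      sSup ((fun α => lineval α b) '' Γ₁) = sSup ((fun α => lineval α b) '' Γ₂))
    (b : S → ℝ) (hb : b ∈ stdSimplex ℝ S) :
    sSup {y : ℝ | ∃ π1 ∈ stdSimplex ℝ A1, ∃ αb : A1 → O → S → ℝ,
        (∀ a1 o, αb a1 o ∈ Γ₁) ∧ y = G.valcomp π1 αb b} ≤
      sSup {y : ℝ | ∃ π1 ∈ stdSimplex ℝ A1, ∃ αb : A1 → O → S → ℝ,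
        (∀ a1 o, αb a1 o ∈ Γ₂) ∧ y = G.valcomp π1 αb b} := by
  classical
  obtain ⟨α₀, hα₀⟩ := hne2
  obtain ⟨α₁, hα₁⟩ := hne1
  have hπ0 : (Pi.single (Classical.arbitrary A1) 1 : A1 → ℝ) ∈ stdSimplex ℝ A1 :=
    single_mem_stdSimplex ℝ _
  have hbdd2' := bddAbove_valcompSet G hbdd2 hb
  have hset1ne : {y : ℝ | ∃ π1 ∈ stdSimplex ℝ A1, ∃ αb : A1 → O → S → ℝ,
      (∀ a1 o, αb a1 o ∈ Γ₁) ∧ y = G.valcomp π1 αb b}.Nonempty :=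
    ⟨_, ⟨_, hπ0, (fun _ _ => α₁), fun _ _ => hα₁, rfl⟩⟩
  apply csSup_le hset1ne
  rintro y ⟨π1, hπ1, αb, hαb, rfl⟩
  apply le_of_forall_pos_le_add
  intro ε hε
  set C : Set (A1 → O → S → ℝ) := {x | ∀ a1 o, x a1 o ∈ Γ₂} with hCdef
  have hCconv : Convex ℝ C := by
    intro x hx y' hy' p q hp hq hpq a1 o
    exact hconv2 (hx a1 o) (hy' a1 o) hp hq hpq
  have hCne : C.Nonempty := ⟨fun _ _ => α₀, fun _ _ => hα₀⟩
  have hFbdd : BddAbove ((fun x => Finset.univ.inf' Finset.univ_nonempty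
      fun d : S → A2 => Lfun G π1 b d x) '' C) := by
    apply BddAbove.mono _ hbdd2'
    rintro _ ⟨x, hx, rfl⟩
    exact ⟨π1, hπ1, x, hx, inf'_Lfun_eq G π1 hb.1 x⟩
  obtain ⟨lam, hlam0, hlam1, hlamle⟩ := minimax_aux hCconv hCne (Lfun G π1 b)
    (fun d x' y' p q hp hq hpq => Lfun_affine G π1 b d x' y' p q hp hq hpq) hFbdd hε
  set t : ℝ := sSup ((fun x => Finset.univ.inf' Finset.univ_nonempty
      fun d : S → A2 => Lfun G π1 b d x) '' C) with ht0
  set w : A1 → O → S → ℝ :=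
    fun a1 o s' => ∑ d, lam d * ∑ s, b s * (π1 a1 * (G.γ * G.T s a1 (d s) o s')) with hw0
  set CR : ℝ := ∑ d, lam d * ∑ s, b s * ∑ a1, π1 a1 * G.R s a1 (d s) with hCR
  have hdecomp : ∀ x : A1 → O → S → ℝ, ∑ d, lam d * Lfun G π1 b d x
      = CR + ∑ a1, ∑ o, ∑ s', w a1 o s' * x a1 o s' := fun x => sum_lam_Lfun G π1 b lam x
  have hwnn : ∀ a1 o s', 0 ≤ w a1 o s' := by
    intro a1 o s'
    refine Finset.sum_nonneg fun d _ => mul_nonneg (hlam0 d) (Finset.sum_nonneg fun s _ =>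
      mul_nonneg (hb.1 s) (mul_nonneg (hπ1.1 a1)
        (mul_nonneg G.γ_pos.le (G.T_nonneg s a1 (d s) o s'))))
  have hA : G.valcomp π1 αb b ≤ ∑ d, lam d * Lfun G π1 b d αb := by
    have h1 : ∀ d : S → A2, G.valcomp π1 αb b ≤ Lfun G π1 b d αb := by
      intro d
      refine Finset.sum_le_sum fun s _ => mul_le_mul_of_nonneg_left ?_ (hb.1 s)
      exact Finset.inf'_le _ (Finset.mem_univ (d s))
    calc G.valcomp π1 αb b = ∑ d : S → A2, lam d * G.valcomp π1 αb b := by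
          rw [← Finset.sum_mul, hlam1, one_mul]
      _ ≤ ∑ d, lam d * Lfun G π1 b d αb :=
          Finset.sum_le_sum fun d _ => mul_le_mul_of_nonneg_left (h1 d) (hlam0 d)
  have hB : ∀ a1 o, ∑ s', w a1 o s' * αb a1 o s'
      ≤ sSup ((fun α => ∑ s', w a1 o s' * α s') '' Γ₂) := by
    intro a1 o
    have h1 : ∑ s', w a1 o s' * αb a1 o s'
        ≤ sSup ((fun α => ∑ s', w a1 o s' * α s') '' Γ₁) :=
      le_csSup (bddAbove_weighted hbdd1 _ (hwnn a1 o)) ⟨αb a1 o, hαb a1 o, rfl⟩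
    rwa [sSup_weighted_eq ⟨α₁, hα₁⟩ ⟨α₀, hα₀⟩ heq _ (hwnn a1 o)] at h1
  have hC2 : CR + ∑ a1, ∑ o, sSup ((fun α => ∑ s', w a1 o s' * α s') '' Γ₂) ≤ t + ε := by
    apply le_of_forall_pos_le_add
    intro δ hδ
    have hn : (0:ℝ) < (Fintype.card A1 : ℝ) * (Fintype.card O : ℝ) :=
      mul_pos (by exact_mod_cast Fintype.card_pos) (by exact_mod_cast Fintype.card_pos)
    set δ' : ℝ := δ / ((Fintype.card A1 : ℝ) * (Fintype.card O : ℝ)) with hδ'def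
    have hδ' : 0 < δ' := div_pos hδ hn
    have hsel : ∀ a1 o, ∃ α ∈ Γ₂, sSup ((fun α => ∑ s', w a1 o s' * α s') '' Γ₂) - δ'
        < ∑ s', w a1 o s' * α s' := by
      intro a1 o
      obtain ⟨z, ⟨α, hα, rfl⟩, hz⟩ := exists_lt_of_lt_csSup
        (⟨_, ⟨α₀, hα₀, rfl⟩⟩ : ((fun α => ∑ s', w a1 o s' * α s') '' Γ₂).Nonempty)
        (sub_lt_self _ hδ')
      exact ⟨α, hα, hz⟩
    choose g hg1 hg2 using hsel
    have hxC : (fun a1 o => g a1 o) ∈ C := fun a1 o => hg1 a1 o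
    have hle := hlamle _ hxC
    rw [hdecomp] at hle
    have hsum : ∑ a1, ∑ o, (sSup ((fun α => ∑ s', w a1 o s' * α s') '' Γ₂) - δ')
        ≤ ∑ a1, ∑ o, ∑ s', w a1 o s' * g a1 o s' :=
      Finset.sum_le_sum fun a1 _ => Finset.sum_le_sum fun o _ => (hg2 a1 o).le
    have hcount : ∑ a1, ∑ o, (sSup ((fun α => ∑ s', w a1 o s' * α s') '' Γ₂) - δ')
        = (∑ a1, ∑ o, sSup ((fun α => ∑ s', w a1 o s' * α s') '' Γ₂)) - δ := by
      rw [Finset.sum_congr rfl fun a1 _ => Finset.sum_sub_distrib _ _, Finset.sum_sub_distrib]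
      congr 1
      simp only [Finset.sum_const, Finset.card_univ, nsmul_eq_mul]
      rw [hδ'def]
      field_simp
    rw [hcount] at hsum
    linarith
  calc G.valcomp π1 αb b ≤ ∑ d, lam d * Lfun G π1 b d αb := hA
    _ = CR + ∑ a1, ∑ o, ∑ s', w a1 o s' * αb a1 o s' := hdecomp αb
    _ ≤ CR + ∑ a1, ∑ o, sSup ((fun α => ∑ s', w a1 o s' * α s') '' Γ₂) :=
        add_le_add_right (Finset.sum_le_sum fun a1 _ =>
          Finset.sum_le_sum fun o _ => hB a1 o) CR
    _ ≤ t + ε := hC2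
    _ ≤ sSup {y : ℝ | ∃ π1 ∈ stdSimplex ℝ A1, ∃ αb : A1 → O → S → ℝ,
          (∀ a1 o, αb a1 o ∈ Γ₂) ∧ y = G.valcomp π1 αb b} + ε := by
        refine add_le_add_left (csSup_le_csSup hbdd2' (hCne.image _) ?_) ε
        rintro _ ⟨x, hx, rfl⟩
        exact ⟨π1, hπ1, x, hx, inf'_Lfun_eq G π1 hb.1 x⟩

end PosgAux

end OSPOSG

namespace OSPOSG

variable {S A1 A2 O : Type*} [Fintype S] [Fintype A1] [Fintype A2] [Fintype O]
  [Nonempty S] [Nonempty A1] [Nonempty A2] [Nonempty O]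

/-- The max-composition operator `H` does not depend on the convex set of linear functions
chosen to represent the value function. -/
theorem maxComposition_representation_independent (G : OSPOSG S A1 A2 O)
    (Γ₁ Γ₂ : Set (S → ℝ)) (hne1 : Γ₁.Nonempty) (hne2 : Γ₂.Nonempty)
    (hconv1 : Convex ℝ Γ₁) (hconv2 : Convex ℝ Γ₂)
    (hbdd1 : ∀ b ∈ stdSimplex ℝ S, BddAbove ((fun α => lineval α b) '' Γ₁))
    (hbdd2 : ∀ b ∈ stdSimplex ℝ S, BddAbove ((fun α => lineval α b) '' Γ₂))
    (heq : ∀ b ∈ stdSimplex ℝ S,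
      sSup ((fun α => lineval α b) '' Γ₁) = sSup ((fun α => lineval α b) '' Γ₂))
    (b : S → ℝ) (hb : b ∈ stdSimplex ℝ S) :
    sSup {y : ℝ | ∃ π1 ∈ stdSimplex ℝ A1, ∃ αb : A1 → O → S → ℝ,
        (∀ a1 o, αb a1 o ∈ Γ₁) ∧ y = G.valcomp π1 αb b} =
      sSup {y : ℝ | ∃ π1 ∈ stdSimplex ℝ A1, ∃ αb : A1 → O → S → ℝ,
        (∀ a1 o, αb a1 o ∈ Γ₂) ∧ y = G.valcomp π1 αb b} := by
  refine le_antisymm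
    (key_le G Γ₁ Γ₂ hne1 hne2 hconv2 hbdd1 hbdd2 heq b hb)
    (key_le G Γ₂ Γ₁ hne2 hne1 hconv1 hbdd2 hbdd1 (fun b' hb' => (heq b' hb').symm) b hb)

end OSPOSG
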